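/- For all n ≥ 1, μ(n,2) = ⌈2n/3⌉, where μ(n,2) is the minimum over all n×n matrices W over 𝔽₂ with all diagonal entries 1 and each column having at most two nonzero entries, of the maximum over x ∈ 𝔽₂ⁿ of the Hamming weight of W·x. -/

import Mathlib

open Finset

namespace MuAux
variable {α : Type*} [DecidableEq α]
variable {α : Type*} [DecidableEq α]

def rowVal (V : Finset α) (σ : α → α) (x : α → ZMod 2) (i : α) : ZMod 2 :=
  x i + ∑ j ∈ V, if σ j = i ∧ j ≠ i then x j else 0

def good (V : Finset α) (σ : α → α) (x : α → ZMod 2) : Finset α :=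
  V.filter fun i => rowVal V σ x i ≠ 0

lemma rowVal_eval {V S : Finset α} (hS : S ⊆ V) {σ : α → α} {x x' : α → ZMod 2}
    (hagree : ∀ j ∈ V \ S, x j = x' j) (i : α) :
    rowVal V σ x i = x i + ((∑ j ∈ V \ S, if σ j = i ∧ j ≠ i then x' j else 0)
      + ∑ j ∈ S, if σ j = i ∧ j ≠ i then x j else 0) := by
  rw [rowVal, ← Finset.sum_sdiff hS]
  have h : ∑ j ∈ V \ S, (if σ j = i ∧ j ≠ i then x j else 0)
      = ∑ j ∈ V \ S, (if σ j = i ∧ j ≠ i then x' j else 0) :=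
    Finset.sum_congr rfl fun j hj => by rw [hagree j hj]
  rw [h]

lemma rowVal_outside {V S : Finset α} (hS : S ⊆ V) {σ : α → α} {x x' : α → ZMod 2}
    (hagree : ∀ j ∈ V \ S, x j = x' j) {i : α} (hi : i ∈ V \ S)
    (hnot : ∀ j ∈ S, σ j ≠ i) :
    rowVal V σ x i = rowVal (V \ S) σ x' i := by
  rw [rowVal_eval hS hagree, rowVal]
  have h1 : ∑ j ∈ S, (if σ j = i ∧ j ≠ i then x j else 0) = 0 :=
    Finset.sum_eq_zero fun j hj => by simp [hnot j hj]
  rw [h1, hagree i hi, add_zero]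

lemma peel {V S L G : Finset α} {σ : α → α} {x x' : α → ZMod 2}
    (hSV : S ⊆ V) (hGS : G ⊆ S)
    (hrow : ∀ i ∈ V \ S, i ∉ L → rowVal V σ x i = rowVal (V \ S) σ x' i)
    (hGones : ∀ i ∈ G, rowVal V σ x i ≠ 0) :
    (good (V \ S) σ x').card + G.card ≤ (good V σ x).card + L.card := by
  set A := good (V \ S) σ x' with hA
  have hsub : (A \ L) ∪ G ⊆ good V σ x := by
    intro i hi
    rcases Finset.mem_union.1 hi with hi | hi
    · obtain ⟨hiA, hiL⟩ := Finset.mem_sdiff.1 hi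
      obtain ⟨hiV, hival⟩ := Finset.mem_filter.1 hiA
      refine Finset.mem_filter.2 ⟨(Finset.mem_sdiff.1 hiV).1, ?_⟩
      rw [hrow i hiV hiL]; exact hival
    · exact Finset.mem_filter.2 ⟨hSV (hGS hi), hGones i hi⟩
  have hdisj : Disjoint (A \ L) G := by
    refine Finset.disjoint_left.2 fun i hi hiG => ?_
    have h1 : i ∈ V \ S := (Finset.mem_filter.1 (Finset.mem_sdiff.1 hi).1).1
    exact (Finset.mem_sdiff.1 h1).2 (hGS hiG)
  have h1 : (A \ L).card + G.card ≤ (good V σ x).card := by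
    rw [← Finset.card_union_of_disjoint hdisj]
    exact Finset.card_le_card hsub
  have h2 : A.card ≤ (A \ L).card + L.card := Finset.card_le_card_sdiff_add_card
  omega

lemma sum_triple {v u w : α} (f : α → ZMod 2) (h1 : v ≠ u) (h2 : v ≠ w) (h3 : u ≠ w) :
    ∑ j ∈ ({v, u, w} : Finset α), f j = f v + (f u + f w) := by
  rw [Finset.sum_insert (by simp [h1, h2]), Finset.sum_pair h3]

lemma key : ∀ (N : ℕ) (V : Finset α) (σ : α → α), V.card ≤ N →
    ∃ x : α → ZMod 2, (2 * V.card + 2) / 3 ≤ (good V σ x).card := by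
  intro N
  induction N with
  | zero =>
    intro V σ hV
    have : V = ∅ := Finset.card_eq_zero.1 (Nat.le_zero.1 hV)
    subst this
    exact ⟨fun _ => 0, by simp⟩
  | succ N ih =>
    intro V σ hV
    rcases V.eq_empty_or_nonempty with rfl | hne
    · exact ⟨fun _ => 0, by simp⟩
    have hVpos : 1 ≤ V.card := Finset.card_pos.2 hne
    by_cases hin : ∃ v ∈ V, ∀ j ∈ V, ¬(σ j = v ∧ j ≠ v)
    · obtain ⟨v, hvV, hind⟩ := hin
      by_cases hσv : σ v ∈ V ∧ σ v ≠ v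
      · obtain ⟨huV0, huv0⟩ := hσv
        obtain ⟨u, hσvu⟩ : ∃ u, σ v = u := ⟨σ v, rfl⟩
        have huV : u ∈ V := hσvu ▸ huV0
        have huv : u ≠ v := hσvu ▸ huv0
        by_cases hσu : σ u ∈ V ∧ σ u ≠ u
        · -- 1b-ii : path v → u → w
          obtain ⟨w, hσuw⟩ : ∃ w, σ u = w := ⟨σ u, rfl⟩
          have hwV : w ∈ V := hσuw ▸ hσu.1
          have hwu : w ≠ u := hσuw ▸ hσu.2
          have hwv : w ≠ v := fun h => (hind u huV) ⟨by rw [hσuw, h], huv⟩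
          have hvu : v ≠ u := Ne.symm huv
          have hvw : v ≠ w := Ne.symm hwv
          have huw : u ≠ w := Ne.symm hwu
          have hSV : ({v, u, w} : Finset α) ⊆ V := by
            intro t ht
            rcases Finset.mem_insert.1 ht with rfl | ht
            · exact hvV
            rcases Finset.mem_insert.1 ht with rfl | ht
            · exact huV
            · rw [Finset.mem_singleton.1 ht]; exact hwV
          have hScard : ({v, u, w} : Finset α).card = 3 := by
            rw [Finset.card_insert_of_notMem (by simp [hvu, hvw]),
              Finset.card_pair huw]
          have hcard : (V \ {v, u, w}).card = V.card - 3 := by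
            rw [Finset.card_sdiff_of_subset hSV, hScard]
          have hkle : 3 ≤ V.card := hScard ▸ Finset.card_le_card hSV
          obtain ⟨x', hx'⟩ := ih (V \ {v, u, w}) σ (by omega)
          have hdv : ∑ j ∈ V \ ({v, u, w} : Finset α),
              (if σ j = v ∧ j ≠ v then x' j else 0) = 0 :=
            Finset.sum_eq_zero fun j hj => if_neg (hind j (Finset.mem_sdiff.1 hj).1)
          by_cases hσw : σ w = u
          · -- 1b-ii-A : σ w = u (pendant 2-cycle) : gain {v,u}, leak ∅
            set x : α → ZMod 2 := fun t => if t = v then 1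
              else if t = u then (∑ j ∈ V \ ({v, u, w} : Finset α),
                if σ j = u ∧ j ≠ u then x' j else 0)
              else if t = w then 0 else x' t with hx
            have hagree : ∀ j ∈ V \ ({v, u, w} : Finset α), x j = x' j := by
              intro j hj
              have h2 := (Finset.mem_sdiff.1 hj).2
              have h1v : j ≠ v := fun h => h2 (by simp [h])
              have h1u : j ≠ u := fun h => h2 (by simp [h])
              have h1w : j ≠ w := fun h => h2 (by simp [h])
              simp [hx, h1v, h1u, h1w]
            have hrow : ∀ i ∈ V \ ({v, u, w} : Finset α), i ∉ (∅ : Finset α) →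
                rowVal V σ x i = rowVal (V \ {v, u, w}) σ x' i := by
              intro i hi _
              have hiS := (Finset.mem_sdiff.1 hi).2
              refine rowVal_outside hSV hagree hi ?_
              intro j hj
              rcases Finset.mem_insert.1 hj with hj' | hj
              · rw [hj', hσvu]; intro h; exact hiS (by simp [h])
              rcases Finset.mem_insert.1 hj with hj' | hj
              · rw [hj', hσuw]; intro h; exact hiS (by simp [h])
              · rw [Finset.mem_singleton.1 hj, hσw]
                intro h; exact hiS (by simp [h])
            have hGones : ∀ i ∈ ({v, u} : Finset α), rowVal V σ x i ≠ 0 := by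
              intro i hi
              rcases Finset.mem_insert.1 hi with rfl | hi
              · -- row v
                rw [rowVal_eval hSV hagree, hdv, sum_triple _ hvu hvw huw]
                simp [hx, hσvu, hσuw, hσw, hvu, hvw, huw, huv, hwv, hwu]
              · -- row u
                rw [Finset.mem_singleton.1 hi]
                rw [rowVal_eval hSV hagree, sum_triple _ hvu hvw huw]
                simp only [hx, hσvu, hσuw, hσw, ne_eq, not_true_eq_false, and_false,
                  if_false, if_pos, and_true, if_true]
                simp [hvu, hvw, huw, huv, hwv, hwu]
                generalize (∑ j ∈ V \ ({v, u, w} : Finset α),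
                  if σ j = u ∧ j ≠ u then x' j else 0) = a
                revert a; decide
            have hGS : ({v, u} : Finset α) ⊆ ({v, u, w} : Finset α) := by
              intro t ht
              rcases Finset.mem_insert.1 ht with rfl | ht
              · simp
              · rw [Finset.mem_singleton.1 ht]; simp
            have hpeel := peel hSV hGS hrow hGones
            refine ⟨x, ?_⟩
            rw [hcard] at hx'
            have hG2 : ({v, u} : Finset α).card = 2 := Finset.card_pair hvu
            rw [hG2, Finset.card_empty] at hpeel
            omega
          · -- 1b-ii-B : σ w ∉ S : gain {v,u,w}, leak {σ w}
            have hσwv : σ w ≠ v := fun h => (hind w hwV) ⟨h, hwv⟩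
            set x : α → ZMod 2 := fun t => if t = v then 1
              else if t = u then (∑ j ∈ V \ ({v, u, w} : Finset α),
                if σ j = u ∧ j ≠ u then x' j else 0)
              else if t = w then 1 + (∑ j ∈ V \ ({v, u, w} : Finset α),
                if σ j = u ∧ j ≠ u then x' j else 0)
                + (∑ j ∈ V \ ({v, u, w} : Finset α),
                if σ j = w ∧ j ≠ w then x' j else 0)
              else x' t with hx
            have hagree : ∀ j ∈ V \ ({v, u, w} : Finset α), x j = x' j := by
              intro j hj
              have h2 := (Finset.mem_sdiff.1 hj).2
              have h1v : j ≠ v := fun h => h2 (by simp [h])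
              have h1u : j ≠ u := fun h => h2 (by simp [h])
              have h1w : j ≠ w := fun h => h2 (by simp [h])
              simp [hx, h1v, h1u, h1w]
            have hrow : ∀ i ∈ V \ ({v, u, w} : Finset α), i ∉ ({σ w} : Finset α) →
                rowVal V σ x i = rowVal (V \ {v, u, w}) σ x' i := by
              intro i hi hiL
              have hiS := (Finset.mem_sdiff.1 hi).2
              refine rowVal_outside hSV hagree hi ?_
              intro j hj
              rcases Finset.mem_insert.1 hj with hj' | hj
              · rw [hj', hσvu]; intro h; exact hiS (by simp [h])
              rcases Finset.mem_insert.1 hj with hj' | hj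
              · rw [hj', hσuw]; intro h; exact hiS (by simp [h])
              · rw [Finset.mem_singleton.1 hj]
                intro h; exact hiL (by simp [h])
            have hGones : ∀ i ∈ ({v, u, w} : Finset α), rowVal V σ x i ≠ 0 := by
              intro i hi
              rcases Finset.mem_insert.1 hi with hi' | hi
              · rw [hi', rowVal_eval hSV hagree, hdv, sum_triple _ hvu hvw huw]
                simp [hx, hσvu, hσuw, hσwv, hvu, hvw, huw, huv, hwv, hwu]
              rcases Finset.mem_insert.1 hi with hi' | hi
              · rw [hi', rowVal_eval hSV hagree, sum_triple _ hvu hvw huw]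
                simp [hx, hσvu, hσuw, hσw, hvu, hvw, huw, huv, hwv, hwu]
                generalize (∑ j ∈ V \ ({v, u, w} : Finset α),
                  if σ j = u ∧ j ≠ u then x' j else 0) = a
                revert a; decide
              · rw [Finset.mem_singleton.1 hi]
                rw [rowVal_eval hSV hagree, sum_triple _ hvu hvw huw]
                simp [hx, hσvu, hσuw, hσw, hvu, hvw, huw, huv, hwv, hwu]
                generalize (∑ j ∈ V \ ({v, u, w} : Finset α),
                  if σ j = u ∧ j ≠ u then x' j else 0) = a
                generalize (∑ j ∈ V \ ({v, u, w} : Finset α),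
                  if σ j = w ∧ j ≠ w then x' j else 0) = b
                revert a b; decide
            have hpeel := peel hSV (Finset.Subset.refl _) hrow hGones
            refine ⟨x, ?_⟩
            rw [hcard] at hx'
            rw [hScard, Finset.card_singleton] at hpeel
            omega
        · -- 1b-i : σ u leaves V (or is u) : S = {v, u}, gain 2, leak ∅
          have hvu : v ≠ u := Ne.symm huv
          have hSV : ({v, u} : Finset α) ⊆ V := by
            intro t ht
            rcases Finset.mem_insert.1 ht with rfl | ht
            · exact hvV
            · rw [Finset.mem_singleton.1 ht]; exact huV
          have hScard : ({v, u} : Finset α).card = 2 := Finset.card_pair hvu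
          have hcard : (V \ {v, u}).card = V.card - 2 := by
            rw [Finset.card_sdiff_of_subset hSV, hScard]
          have hkle : 2 ≤ V.card := hScard ▸ Finset.card_le_card hSV
          obtain ⟨x', hx'⟩ := ih (V \ {v, u}) σ (by omega)
          have hdv : ∑ j ∈ V \ ({v, u} : Finset α),
              (if σ j = v ∧ j ≠ v then x' j else 0) = 0 :=
            Finset.sum_eq_zero fun j hj => if_neg (hind j (Finset.mem_sdiff.1 hj).1)
          have hσuv : σ u ≠ v := fun h => hσu ⟨by rw [h]; exact hvV, by rw [h]; exact hvu⟩
          set x : α → ZMod 2 := fun t => if t = v then 1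
            else if t = u then (∑ j ∈ V \ ({v, u} : Finset α),
              if σ j = u ∧ j ≠ u then x' j else 0)
            else x' t with hx
          have hagree : ∀ j ∈ V \ ({v, u} : Finset α), x j = x' j := by
            intro j hj
            have h2 := (Finset.mem_sdiff.1 hj).2
            have h1v : j ≠ v := fun h => h2 (by simp [h])
            have h1u : j ≠ u := fun h => h2 (by simp [h])
            simp [hx, h1v, h1u]
          have hrow : ∀ i ∈ V \ ({v, u} : Finset α), i ∉ (∅ : Finset α) →
              rowVal V σ x i = rowVal (V \ {v, u}) σ x' i := by
            intro i hi _
            have hiS := (Finset.mem_sdiff.1 hi).2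
            refine rowVal_outside hSV hagree hi ?_
            intro j hj
            rcases Finset.mem_insert.1 hj with hj' | hj
            · rw [hj', hσvu]; intro h; exact hiS (by simp [h])
            · rw [Finset.mem_singleton.1 hj]
              intro h
              have hiu : i ≠ u := fun e => hiS (by simp [e])
              exact hσu ⟨by rw [h]; exact (Finset.mem_sdiff.1 hi).1, by rw [h]; exact hiu⟩
          have hGones : ∀ i ∈ ({v, u} : Finset α), rowVal V σ x i ≠ 0 := by
            intro i hi
            rcases Finset.mem_insert.1 hi with hi' | hi
            · rw [hi', rowVal_eval hSV hagree, hdv, Finset.sum_pair hvu]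
              simp [hx, hσvu, hσuv, hvu, huv]
            · rw [Finset.mem_singleton.1 hi]
              rw [rowVal_eval hSV hagree, Finset.sum_pair hvu]
              simp [hx, hσvu, hσuv, hvu, huv]
              generalize (∑ j ∈ V \ ({v, u} : Finset α),
                if σ j = u ∧ j ≠ u then x' j else 0) = a
              revert a; decide
          have hpeel := peel hSV (Finset.Subset.refl _) hrow hGones
          refine ⟨x, ?_⟩
          rw [hcard] at hx'
          rw [hScard, Finset.card_empty] at hpeel
          omega
      · -- case 1a : remove {v}, gain 1, no leak
        have hSV : ({v} : Finset α) ⊆ V := Finset.singleton_subset_iff.2 hvV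
        have hcard : (V \ {v}).card = V.card - 1 := by
          rw [Finset.card_sdiff_of_subset hSV, Finset.card_singleton]
        obtain ⟨x', hx'⟩ := ih (V \ {v}) σ (by omega)
        set x : α → ZMod 2 := fun t => if t = v then 1 else x' t with hxdef
        have hagree : ∀ j ∈ V \ {v}, x j = x' j := by
          intro j hj
          have hjv : j ≠ v := (Finset.mem_sdiff.1 hj).2 ∘ Finset.mem_singleton.2
          simp [hxdef, hjv]
        have hrow : ∀ i ∈ V \ {v}, i ∉ (∅ : Finset α) →
            rowVal V σ x i = rowVal (V \ {v}) σ x' i := by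
          intro i hi _
          refine rowVal_outside hSV hagree hi ?_
          intro j hj hji
          rw [Finset.mem_singleton.1 hj] at hji
          have hiV : i ∈ V := (Finset.mem_sdiff.1 hi).1
          have hiv : i ≠ v := fun h => (Finset.mem_sdiff.1 hi).2 (Finset.mem_singleton.2 h)
          exact hσv ⟨by rw [hji]; exact hiV, by rw [hji]; exact hiv⟩
        have hGones : ∀ i ∈ ({v} : Finset α), rowVal V σ x i ≠ 0 := by
          simp only [Finset.mem_singleton, forall_eq]
          have hzero : ∑ j ∈ V, (if σ j = v ∧ j ≠ v then x j else 0) = 0 :=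
            Finset.sum_eq_zero fun j hj => if_neg (hind j hj)
          have : rowVal V σ x v = 1 := by
            rw [rowVal, hzero, add_zero]; simp [hxdef]
          rw [this]; decide
        have hpeel := peel hSV (Finset.Subset.refl {v}) hrow hGones
        refine ⟨x, ?_⟩
        simp only [Finset.card_singleton, Finset.card_empty] at hpeel
        rw [hcard] at hx'
        omega
    · -- branch 2 : every vertex has an in-neighbour, so σ is a permutation of V
      push_neg at hin
      have htot : ∀ b ∈ V, σ b ∈ V ∧ σ b ≠ b := by
        have hsurj := Finset.surj_on_of_inj_on_of_card_le
          (s := V) (t := V) (fun a _ha => (hin a _ha).choose)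
          (fun a ha => ((hin a ha).choose_spec).1)
          (fun a₁ a₂ ha₁ ha₂ h => by
            have h1 := ((hin a₁ ha₁).choose_spec).2.1
            have h2 := ((hin a₂ ha₂).choose_spec).2.1
            rw [← h1, ← h2, h])
          le_rfl
        intro b hb
        obtain ⟨a, ha, hba⟩ := hsurj b hb
        have hspec := (hin a ha).choose_spec
        have hσb : σ b = a := by rw [hba]; exact hspec.2.1
        refine ⟨by rw [hσb]; exact ha, ?_⟩
        rw [hσb]
        intro h
        exact hspec.2.2 (by rw [← hba]; exact h.symm)
      have hinj : ∀ a₁ ∈ V, ∀ a₂ ∈ V, σ a₁ = σ a₂ → a₁ = a₂ := by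
        intro a₁ ha₁ a₂ ha₂ h
        exact Finset.inj_on_of_surj_on_of_card_le (s := V) (t := V)
          (fun a _ => σ a) (fun a ha => (htot a ha).1)
          (fun b hb => by obtain ⟨j, hj, hjb, -⟩ := hin b hb; exact ⟨j, hj, hjb⟩)
          le_rfl ha₁ ha₂ h
      obtain ⟨v, hvV⟩ := hne
      obtain ⟨u, hσvu⟩ : ∃ u, σ v = u := ⟨σ v, rfl⟩
      have huV : u ∈ V := hσvu ▸ (htot v hvV).1
      have huv : u ≠ v := fun h => (htot v hvV).2 (by rw [hσvu, h])
      have hvu : v ≠ u := Ne.symm huv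
      by_cases h2c : σ u = v
      · -- 2a : 2-cycle {v, u} : gain 2, remove 2, leak ∅
        have hSV : ({v, u} : Finset α) ⊆ V := by
          intro t ht
          rcases Finset.mem_insert.1 ht with rfl | ht
          · exact hvV
          · rw [Finset.mem_singleton.1 ht]; exact huV
        have hScard : ({v, u} : Finset α).card = 2 := Finset.card_pair hvu
        have hcard : (V \ {v, u}).card = V.card - 2 := by
          rw [Finset.card_sdiff_of_subset hSV, hScard]
        have hkle : 2 ≤ V.card := hScard ▸ Finset.card_le_card hSV
        obtain ⟨x', hx'⟩ := ih (V \ {v, u}) σ (by omega)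
        have hdv : ∑ j ∈ V \ ({v, u} : Finset α),
            (if σ j = v ∧ j ≠ v then x' j else 0) = 0 := by
          refine Finset.sum_eq_zero fun j hj => ?_
          rw [if_neg]
          rintro ⟨h, -⟩
          have : j = u := hinj j (Finset.mem_sdiff.1 hj).1 u huV (by rw [h, h2c])
          exact (Finset.mem_sdiff.1 hj).2 (by simp [this])
        have hdu : ∑ j ∈ V \ ({v, u} : Finset α),
            (if σ j = u ∧ j ≠ u then x' j else 0) = 0 := by
          refine Finset.sum_eq_zero fun j hj => ?_
          rw [if_neg]
          rintro ⟨h, -⟩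
          have : j = v := hinj j (Finset.mem_sdiff.1 hj).1 v hvV (by rw [h, hσvu])
          exact (Finset.mem_sdiff.1 hj).2 (by simp [this])
        set x : α → ZMod 2 := fun t => if t = v then 1 else if t = u then 0 else x' t with hx
        have hagree : ∀ j ∈ V \ ({v, u} : Finset α), x j = x' j := by
          intro j hj
          have h2 := (Finset.mem_sdiff.1 hj).2
          have h1v : j ≠ v := fun h => h2 (by simp [h])
          have h1u : j ≠ u := fun h => h2 (by simp [h])
          simp [hx, h1v, h1u]
        have hrow : ∀ i ∈ V \ ({v, u} : Finset α), i ∉ (∅ : Finset α) →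
            rowVal V σ x i = rowVal (V \ {v, u}) σ x' i := by
          intro i hi _
          have hiS := (Finset.mem_sdiff.1 hi).2
          refine rowVal_outside hSV hagree hi ?_
          intro j hj
          rcases Finset.mem_insert.1 hj with rfl | hj
          · rw [hσvu]; intro h; exact hiS (by simp [h])
          · rw [Finset.mem_singleton.1 hj, h2c]
            intro h; exact hiS (by simp [h])
        have hGones : ∀ i ∈ ({v, u} : Finset α), rowVal V σ x i ≠ 0 := by
          intro i hi
          rcases Finset.mem_insert.1 hi with rfl | hi
          · rw [rowVal_eval hSV hagree, hdv, Finset.sum_pair hvu]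
            simp [hx, hσvu, h2c, hvu, huv]
          · rw [Finset.mem_singleton.1 hi]
            rw [rowVal_eval hSV hagree, hdu, Finset.sum_pair hvu]
            simp [hx, hσvu, h2c, hvu, huv]
        have hpeel := peel hSV (Finset.Subset.refl _) hrow hGones
        refine ⟨x, ?_⟩
        rw [hcard] at hx'
        rw [hScard, Finset.card_empty] at hpeel
        omega
      · -- 2b : path v → u → w with w ∉ {v, u}
        obtain ⟨w, hσuw⟩ : ∃ w, σ u = w := ⟨σ u, rfl⟩
        have hwV : w ∈ V := hσuw ▸ (htot u huV).1
        have hwu : w ≠ u := fun h => (htot u huV).2 (by rw [hσuw, h])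
        have hwv : w ≠ v := fun h => h2c (by rw [hσuw, h])
        have hvw : v ≠ w := Ne.symm hwv
        have huw : u ≠ w := Ne.symm hwu
        have hSV : ({v, u, w} : Finset α) ⊆ V := by
          intro t ht
          rcases Finset.mem_insert.1 ht with rfl | ht
          · exact hvV
          rcases Finset.mem_insert.1 ht with rfl | ht
          · exact huV
          · rw [Finset.mem_singleton.1 ht]; exact hwV
        have hScard : ({v, u, w} : Finset α).card = 3 := by
          rw [Finset.card_insert_of_notMem (by simp [hvu, hvw]), Finset.card_pair huw]
        have hcard : (V \ {v, u, w}).card = V.card - 3 := by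
          rw [Finset.card_sdiff_of_subset hSV, hScard]
        have hkle : 3 ≤ V.card := hScard ▸ Finset.card_le_card hSV
        obtain ⟨x', hx'⟩ := ih (V \ {v, u, w}) σ (by omega)
        have hdu : ∑ j ∈ V \ ({v, u, w} : Finset α),
            (if σ j = u ∧ j ≠ u then x' j else 0) = 0 := by
          refine Finset.sum_eq_zero fun j hj => ?_
          rw [if_neg]
          rintro ⟨h, -⟩
          have : j = v := hinj j (Finset.mem_sdiff.1 hj).1 v hvV (by rw [h, hσvu])
          exact (Finset.mem_sdiff.1 hj).2 (by simp [this])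
        have hdw : ∑ j ∈ V \ ({v, u, w} : Finset α),
            (if σ j = w ∧ j ≠ w then x' j else 0) = 0 := by
          refine Finset.sum_eq_zero fun j hj => ?_
          rw [if_neg]
          rintro ⟨h, -⟩
          have : j = u := hinj j (Finset.mem_sdiff.1 hj).1 u huV (by rw [h, hσuw])
          exact (Finset.mem_sdiff.1 hj).2 (by simp [this])
        by_cases h3c : σ w = v
        · -- 2b-i : 3-cycle : gain {v,u}, leak ∅
          have hdv : ∑ j ∈ V \ ({v, u, w} : Finset α),
              (if σ j = v ∧ j ≠ v then x' j else 0) = 0 := by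
            refine Finset.sum_eq_zero fun j hj => ?_
            rw [if_neg]
            rintro ⟨h, -⟩
            have : j = w := hinj j (Finset.mem_sdiff.1 hj).1 w hwV (by rw [h, h3c])
            exact (Finset.mem_sdiff.1 hj).2 (by simp [this])
          set x : α → ZMod 2 := fun t => if t = v then 1
            else if t = u then 0 else if t = w then 0 else x' t with hx
          have hagree : ∀ j ∈ V \ ({v, u, w} : Finset α), x j = x' j := by
            intro j hj
            have h2 := (Finset.mem_sdiff.1 hj).2
            have h1v : j ≠ v := fun h => h2 (by simp [h])
            have h1u : j ≠ u := fun h => h2 (by simp [h])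
            have h1w : j ≠ w := fun h => h2 (by simp [h])
            simp [hx, h1v, h1u, h1w]
          have hrow : ∀ i ∈ V \ ({v, u, w} : Finset α), i ∉ (∅ : Finset α) →
              rowVal V σ x i = rowVal (V \ {v, u, w}) σ x' i := by
            intro i hi _
            have hiS := (Finset.mem_sdiff.1 hi).2
            refine rowVal_outside hSV hagree hi ?_
            intro j hj
            rcases Finset.mem_insert.1 hj with hj' | hj
            · rw [hj', hσvu]; intro h; exact hiS (by simp [h])
            rcases Finset.mem_insert.1 hj with hj' | hj
            · rw [hj', hσuw]; intro h; exact hiS (by simp [h])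
            · rw [Finset.mem_singleton.1 hj, h3c]
              intro h; exact hiS (by simp [h])
          have hGones : ∀ i ∈ ({v, u} : Finset α), rowVal V σ x i ≠ 0 := by
            intro i hi
            rcases Finset.mem_insert.1 hi with hi' | hi
            · rw [hi', rowVal_eval hSV hagree, hdv, sum_triple _ hvu hvw huw]
              simp [hx, hσvu, hσuw, h3c, hvu, hvw, huw, huv, hwv, hwu]
            · rw [Finset.mem_singleton.1 hi]
              rw [rowVal_eval hSV hagree, hdu, sum_triple _ hvu hvw huw]
              simp [hx, hσvu, hσuw, h3c, hvu, hvw, huw, huv, hwv, hwu]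
          have hGS : ({v, u} : Finset α) ⊆ ({v, u, w} : Finset α) := by
            intro t ht
            rcases Finset.mem_insert.1 ht with rfl | ht
            · simp
            · rw [Finset.mem_singleton.1 ht]; simp
          have hpeel := peel hSV hGS hrow hGones
          refine ⟨x, ?_⟩
          rw [hcard] at hx'
          have hG2 : ({v, u} : Finset α).card = 2 := Finset.card_pair hvu
          rw [hG2, Finset.card_empty] at hpeel
          omega
        · -- 2b-ii : σ w ∉ S : gain {v,u,w}, leak {σ w}
          have hswu : σ w ≠ u := fun h => hwv (hinj w hwV v hvV (by rw [h, hσvu]))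
          have hsww : σ w ≠ w := (htot w hwV).2
          set x : α → ZMod 2 := fun t => if t = v then 1 + (∑ j ∈ V \ ({v, u, w} : Finset α),
              if σ j = v ∧ j ≠ v then x' j else 0)
            else if t = u then (∑ j ∈ V \ ({v, u, w} : Finset α),
              if σ j = v ∧ j ≠ v then x' j else 0)
            else if t = w then 1 + (∑ j ∈ V \ ({v, u, w} : Finset α),
              if σ j = v ∧ j ≠ v then x' j else 0)
            else x' t with hx
          have hagree : ∀ j ∈ V \ ({v, u, w} : Finset α), x j = x' j := by
            intro j hj
            have h2 := (Finset.mem_sdiff.1 hj).2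
            have h1v : j ≠ v := fun h => h2 (by simp [h])
            have h1u : j ≠ u := fun h => h2 (by simp [h])
            have h1w : j ≠ w := fun h => h2 (by simp [h])
            simp [hx, h1v, h1u, h1w]
          have hrow : ∀ i ∈ V \ ({v, u, w} : Finset α), i ∉ ({σ w} : Finset α) →
              rowVal V σ x i = rowVal (V \ {v, u, w}) σ x' i := by
            intro i hi hiL
            have hiS := (Finset.mem_sdiff.1 hi).2
            refine rowVal_outside hSV hagree hi ?_
            intro j hj
            rcases Finset.mem_insert.1 hj with hj' | hj
            · rw [hj', hσvu]; intro h; exact hiS (by simp [h])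
            rcases Finset.mem_insert.1 hj with hj' | hj
            · rw [hj', hσuw]; intro h; exact hiS (by simp [h])
            · rw [Finset.mem_singleton.1 hj]
              intro h; exact hiL (by simp [h])
          have hGones : ∀ i ∈ ({v, u, w} : Finset α), rowVal V σ x i ≠ 0 := by
            intro i hi
            rcases Finset.mem_insert.1 hi with hi' | hi
            · rw [hi', rowVal_eval hSV hagree, sum_triple _ hvu hvw huw]
              simp [hx, hσvu, hσuw, h3c, hswu, hvu, hvw, huw, huv, hwv, hwu]
              generalize (∑ j ∈ V \ ({v, u, w} : Finset α),
                if σ j = v ∧ j ≠ v then x' j else 0) = a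
              revert a; decide
            rcases Finset.mem_insert.1 hi with hi' | hi
            · rw [hi', rowVal_eval hSV hagree, hdu, sum_triple _ hvu hvw huw]
              simp [hx, hσvu, hσuw, h3c, hswu, hvu, hvw, huw, huv, hwv, hwu]
              generalize (∑ j ∈ V \ ({v, u, w} : Finset α),
                if σ j = v ∧ j ≠ v then x' j else 0) = a
              revert a; decide
            · rw [Finset.mem_singleton.1 hi]
              rw [rowVal_eval hSV hagree, hdw, sum_triple _ hvu hvw huw]
              simp [hx, hσvu, hσuw, h3c, hswu, hvu, hvw, huw, huv, hwv, hwu]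
              generalize (∑ j ∈ V \ ({v, u, w} : Finset α),
                if σ j = v ∧ j ≠ v then x' j else 0) = a
              revert a; decide
          have hpeel := peel hSV (Finset.Subset.refl _) hrow hGones
          refine ⟨x, ?_⟩
          rw [hcard] at hx'
          rw [hScard, Finset.card_singleton] at hpeel
          omega

lemma zmod2_ne : ∀ a : ZMod 2, a ≠ 0 → a = 1 := by decide

lemma mulVec_eq {n : ℕ} (W : Matrix (Fin n) (Fin n) (ZMod 2)) (σ : Fin n → Fin n)
    (hdiag : ∀ i, W i i = 1)
    (hW : ∀ i j, i ≠ j → W i j = if σ j = i then 1 else 0) (x : Fin n → ZMod 2) (i : Fin n) :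
    W.mulVec x i = rowVal Finset.univ σ x i := by
  have hpt : ∀ j, W i j * x j
      = (if j = i then x j else 0) + (if σ j = i ∧ j ≠ i then x j else 0) := by
    intro j
    by_cases hji : j = i
    · subst hji
      rw [hdiag j, if_pos rfl, one_mul]
      simp
    · rw [if_neg hji, hW i j (Ne.symm hji), zero_add]
      by_cases hσ : σ j = i
      · rw [if_pos hσ, if_pos ⟨hσ, hji⟩, one_mul]
      · rw [if_neg hσ, if_neg (fun h => hσ h.1), zero_mul]
  rw [Matrix.mulVec, dotProduct, rowVal]
  rw [Finset.sum_congr rfl fun j _ => hpt j, Finset.sum_add_distrib]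
  congr 1
  simp

lemma hamming_eq {n : ℕ} (W : Matrix (Fin n) (Fin n) (ZMod 2)) (σ : Fin n → Fin n)
    (hdiag : ∀ i, W i i = 1)
    (hW : ∀ i j, i ≠ j → W i j = if σ j = i then 1 else 0) (x : Fin n → ZMod 2) :
    hammingNorm (W.mulVec x) = (good Finset.univ σ x).card := by
  refine congrArg Finset.card ?_
  ext i
  simp only [hammingNorm, good, Finset.mem_filter, Finset.mem_univ, true_and]
  rw [mulVec_eq W σ hdiag hW]

lemma col_card {n : ℕ} (W : Matrix (Fin n) (Fin n) (ZMod 2)) (j : Fin n) :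
    hammingNorm (fun i => W i j) = (Finset.univ.filter fun i => W i j ≠ 0).card := rfl

lemma lower {n : ℕ} (W : Matrix (Fin n) (Fin n) (ZMod 2))
    (hdiag : ∀ i, W i i = 1) (hcol : ∀ j, hammingNorm (fun i => W i j) ≤ 2) :
    ∃ x : Fin n → ZMod 2, (2 * n + 2) / 3 ≤ hammingNorm (W.mulVec x) := by
  classical
  set σ : Fin n → Fin n :=
    fun j => if h : ∃ i, W i j = 1 ∧ i ≠ j then h.choose else j with hσdef
  have hW : ∀ i j, i ≠ j → W i j = if σ j = i then 1 else 0 := by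
    intro i j hij
    by_cases hc : σ j = i
    · rw [if_pos hc]
      by_cases h : ∃ i, W i j = 1 ∧ i ≠ j
      · have : σ j = h.choose := by rw [hσdef]; exact dif_pos h
        rw [this] at hc
        rw [← hc]
        exact h.choose_spec.1
      · exfalso
        have : σ j = j := by rw [hσdef]; exact dif_neg h
        rw [this] at hc
        exact hij hc.symm
    · rw [if_neg hc]
      by_contra hne
      have h1 : W i j = 1 := zmod2_ne _ hne
      have h : ∃ i, W i j = 1 ∧ i ≠ j := ⟨i, h1, hij⟩
      have hσj : σ j = h.choose := by rw [hσdef]; exact dif_pos h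
      have hch := h.choose_spec
      -- three distinct elements in the column support
      have hsub : ({i, h.choose, j} : Finset (Fin n)) ⊆
          Finset.univ.filter fun r => W r j ≠ 0 := by
        intro t ht
        simp only [Finset.mem_insert, Finset.mem_singleton] at ht
        refine Finset.mem_filter.2 ⟨Finset.mem_univ t, ?_⟩
        rcases ht with h | h | h
        · rw [h]; exact hne
        · rw [h, hch.1]; decide
        · rw [h, hdiag j]; decide
      have hchi : h.choose ≠ i := fun e => hc (hσj.trans e)
      have hchj : h.choose ≠ j := hch.2
      have hcard3 : ({i, h.choose, j} : Finset (Fin n)).card = 3 := by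
        rw [Finset.card_insert_of_notMem (by simp [Ne.symm hchi, hij]),
          Finset.card_pair hchj]
      have := Finset.card_le_card hsub
      rw [hcard3] at this
      have h2 := hcol j
      rw [col_card] at h2
      omega
  obtain ⟨x, hx⟩ := key (Fintype.card (Fin n)) Finset.univ σ le_rfl
  refine ⟨x, ?_⟩
  rw [hamming_eq W σ hdiag hW]
  rwa [Finset.card_univ, Fintype.card_fin] at hx

/-- the block-of-3 successor map -/
def σup (n : ℕ) : Fin n → Fin n := fun j =>
  if h : 3 * (j.val / 3) + 3 ≤ n then
    ⟨3 * (j.val / 3) + (j.val % 3 + 1) % 3, by omega⟩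
  else j

lemma σup_char {n : ℕ} {j i : Fin n} (h : σup n j = i) (hne : j ≠ i) :
    3 * (j.val / 3) + 3 ≤ n ∧ i.val = 3 * (j.val / 3) + (j.val % 3 + 1) % 3 := by
  by_cases hfull : 3 * (j.val / 3) + 3 ≤ n
  · refine ⟨hfull, ?_⟩
    rw [σup, dif_pos hfull] at h
    rw [← h]
  · exfalso
    rw [σup, dif_neg hfull] at h
    exact hne h

lemma σup_full {n : ℕ} {j : Fin n} (hfull : 3 * (j.val / 3) + 3 ≤ n) :
    (σup n j).val = 3 * (j.val / 3) + (j.val % 3 + 1) % 3 := by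
  rw [σup, dif_pos hfull]

lemma upper (n : ℕ) (hn : 1 ≤ n) :
    ∃ W : Matrix (Fin n) (Fin n) (ZMod 2),
      (∀ i, W i i = 1) ∧ (∀ j, hammingNorm (fun i => W i j) ≤ 2) ∧
      (∀ x : Fin n → ZMod 2, hammingNorm (W.mulVec x) ≤ n - n / 3) := by
  set W : Matrix (Fin n) (Fin n) (ZMod 2) :=
    fun i j => if i = j then 1 else if σup n j = i then 1 else 0 with hWdef
  have hdiag : ∀ i, W i i = 1 := fun i => if_pos rfl
  have hW : ∀ i j, i ≠ j → W i j = if σup n j = i then 1 else 0 := by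
    intro i j hij
    rw [hWdef]
    exact if_neg hij
  refine ⟨W, hdiag, ?_, ?_⟩
  · intro j
    rw [col_card]
    have hsub : (Finset.univ.filter fun i => W i j ≠ 0) ⊆ {j, σup n j} := by
      intro i hi
      have hi' := (Finset.mem_filter.1 hi).2
      by_cases h1 : i = j
      · simp [h1]
      · rw [hW i j h1] at hi'
        by_cases h2 : σup n j = i
        · simp [← h2]
        · rw [if_neg h2] at hi'; exact absurd rfl hi'
    calc (Finset.univ.filter fun i => W i j ≠ 0).card
        ≤ ({j, σup n j} : Finset (Fin n)).card := Finset.card_le_card hsub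
      _ ≤ 2 := by
          refine le_trans (Finset.card_insert_le _ _) ?_
          simp
  · intro x
    rw [hamming_eq W (σup n) hdiag hW]
    -- in each full block there is a zero row
    have hblock : ∀ b : ℕ, b < n / 3 →
        ∃ i : Fin n, i.val / 3 = b ∧ rowVal Finset.univ (σup n) x i = 0 := by
      intro b hb
      have h3 : 3 * b + 3 ≤ n := by omega
      set i0 : Fin n := ⟨3 * b, by omega⟩ with hi0
      set i1 : Fin n := ⟨3 * b + 1, by omega⟩ with hi1
      set i2 : Fin n := ⟨3 * b + 2, by omega⟩ with hi2
      have hrow : ∀ i p : Fin n, σup n p = i → p ≠ i →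
          rowVal Finset.univ (σup n) x i = x i + x p := by
        intro i p hp hpe
        rw [rowVal]
        congr 1
        rw [Finset.sum_eq_single_of_mem p (Finset.mem_univ p)]
        · rw [if_pos ⟨hp, hpe⟩]
        · intro j _ hjp
          rw [if_neg]
          rintro ⟨hji, hjne⟩
          obtain ⟨hfj, hvj⟩ := σup_char hji hjne
          obtain ⟨hfp, hvp⟩ := σup_char hp hpe
          exact hjp (Fin.ext (by omega))
      have hv0 : i0.val = 3 * b := rfl
      have hv1 : i1.val = 3 * b + 1 := rfl
      have hv2 : i2.val = 3 * b + 2 := rfl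
      have hp20 : σup n i2 = i0 := Fin.ext (by rw [σup_full (by omega)]; omega)
      have hp01 : σup n i0 = i1 := Fin.ext (by rw [σup_full (by omega)]; omega)
      have hp12 : σup n i1 = i2 := Fin.ext (by rw [σup_full (by omega)]; omega)
      have hne20 : i2 ≠ i0 := fun h => by have := congrArg Fin.val h; omega
      have hne01 : i0 ≠ i1 := fun h => by have := congrArg Fin.val h; omega
      have hne12 : i1 ≠ i2 := fun h => by have := congrArg Fin.val h; omega
      have hr0 := hrow i0 i2 hp20 hne20
      have hr1 := hrow i1 i0 hp01 hne01
      have hr2 := hrow i2 i1 hp12 hne12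
      have hzero : ∀ a c e : ZMod 2, (a + c) = 0 ∨ (e + a) = 0 ∨ (c + e) = 0 := by decide
      rcases hzero (x i0) (x i2) (x i1) with h | h | h
      · exact ⟨i0, by omega, by rw [hr0]; exact h⟩
      · exact ⟨i1, by omega, by rw [hr1]; exact h⟩
      · exact ⟨i2, by omega, by rw [hr2]; exact h⟩
    -- count the zeros
    set Z : Finset (Fin n) :=
      Finset.univ.filter (fun i => rowVal Finset.univ (σup n) x i = 0) with hZ
    have hZcard : n / 3 ≤ Z.card := by
      have hf : ∀ b : ℕ, ∃ i : Fin n, b < n / 3 → i.val / 3 = b ∧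
          rowVal Finset.univ (σup n) x i = 0 := by
        intro b
        by_cases hb : b < n / 3
        · obtain ⟨i, h1, h2⟩ := hblock b hb
          exact ⟨i, fun _ => ⟨h1, h2⟩⟩
        · exact ⟨⟨0, by omega⟩, fun h => absurd h hb⟩
      choose f hfspec using hf
      refine Finset.le_card_of_inj_on_range f (fun b hb => ?_) (fun b hb b' hb' he => ?_)
      · exact Finset.mem_filter.2 ⟨Finset.mem_univ _, (hfspec b hb).2⟩
      · rw [← (hfspec b hb).1, ← (hfspec b' hb').1, he]
    have hsplit : Z.card + (good Finset.univ (σup n) x).card = n := by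
      classical
      have h := Finset.card_filter_add_card_filter_not
        (s := (Finset.univ : Finset (Fin n)))
        (p := fun i => rowVal Finset.univ (σup n) x i = 0)
      rw [Finset.card_univ, Fintype.card_fin] at h
      have h2 : (Finset.univ.filter fun i => ¬ rowVal Finset.univ (σup n) x i = 0)
          = good Finset.univ (σup n) x := by
        apply Finset.filter_congr_decidable
      rw [← h2]
      convert h using 3
    omega

end MuAux

/-- `μ(n,m)`: minimum over matrices with unit diagonal and column weights `≤ m`
of `max_x |W·x|`. -/
noncomputable def mu (n m : ℕ) : ℕ :=
  sInf {k : ℕ | ∃ W : Matrix (Fin n) (Fin n) (ZMod 2),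
    (∀ i, W i i = 1) ∧ (∀ j, hammingNorm (fun i => W i j) ≤ m) ∧
    k = Finset.univ.sup fun x : Fin n → ZMod 2 => hammingNorm (W.mulVec x)}

/-- `μ(n,2) = ⌈2n/3⌉`. -/
theorem mu_n_two (n : ℕ) (hn : 1 ≤ n) : mu n 2 = (2 * n + 2) / 3 := by
  obtain ⟨W₀, h1, h2, h3⟩ := MuAux.upper n hn
  have hlow : ∀ W : Matrix (Fin n) (Fin n) (ZMod 2), (∀ i, W i i = 1) →
      (∀ j, hammingNorm (fun i => W i j) ≤ 2) →
      (2 * n + 2) / 3 ≤ Finset.univ.sup fun x : Fin n → ZMod 2 => hammingNorm (W.mulVec x) := by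
    intro W hd hc
    obtain ⟨x, hx⟩ := MuAux.lower W hd hc
    exact le_trans hx
      (Finset.le_sup (f := fun x : Fin n → ZMod 2 => hammingNorm (W.mulVec x))
        (Finset.mem_univ x))
  have hk0 : (Finset.univ.sup fun x : Fin n → ZMod 2 => hammingNorm (W₀.mulVec x))
      = (2 * n + 2) / 3 := by
    refine le_antisymm ?_ (hlow W₀ h1 h2)
    refine le_trans (Finset.sup_le fun x _ => h3 x) (by omega)
  have hmem : (2 * n + 2) / 3 ∈ {k : ℕ | ∃ W : Matrix (Fin n) (Fin n) (ZMod 2),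
      (∀ i, W i i = 1) ∧ (∀ j, hammingNorm (fun i => W i j) ≤ 2) ∧
      k = Finset.univ.sup fun x : Fin n → ZMod 2 => hammingNorm (W.mulVec x)} :=
    ⟨W₀, h1, h2, hk0.symm⟩
  rw [mu]
  refine le_antisymm (Nat.sInf_le hmem) (le_csInf ⟨_, hmem⟩ ?_)
  rintro k ⟨W, hd, hc, rfl⟩
  exact hlow W hd hc
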